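/- Let M > 0 and let γ_n : [0,1] → {z ∈ ℂ : 0 < |z| ≤ 1/2} be a sequence of continuously differentiable curves satisfying ∫₀¹ |γ_n'(u)| / ( |γ_n(u)| · |log |γ_n(u)|| ) du ≤ M for every n, and such that γ_n(0) → 0 as n → ∞. Then the Euclidean lengths ∫₀¹ |γ_n'(u)| du tend to 0 as n → ∞. -/

import Mathlib

open Filter Topology

lemma hasDerivWithinAt_cabs {f : ℝ → ℂ} {f' : ℂ} {s : Set ℝ} {x : ℝ}
    (hf : HasDerivWithinAt f f' s x) (hx : f x ≠ 0) :
    HasDerivWithinAt (fun u => ‖f u‖)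
      (((f x).re * f'.re + (f x).im * f'.im) / ‖f x‖) s x := by
  have hre : HasDerivWithinAt (fun u => (f u).re) f'.re s x :=
    Complex.reCLM.hasFDerivAt.comp_hasDerivWithinAt x hf
  have him : HasDerivWithinAt (fun u => (f u).im) f'.im s x :=
    Complex.imCLM.hasFDerivAt.comp_hasDerivWithinAt x hf
  have hs : HasDerivWithinAt (fun u => (f u).re * (f u).re + (f u).im * (f u).im)
      (f'.re * (f x).re + (f x).re * f'.re + (f'.im * (f x).im + (f x).im * f'.im)) s x :=
    (hre.mul hre).add (him.mul him)
  have hne : (f x).re * (f x).re + (f x).im * (f x).im ≠ 0 := by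
    have := Complex.normSq_pos.2 hx
    rw [Complex.normSq_apply] at this
    exact this.ne'
  have hsqrt := (Real.hasDerivAt_sqrt hne).comp_hasDerivWithinAt x hs
  have habs : Real.sqrt ((f x).re * (f x).re + (f x).im * (f x).im) = ‖f x‖ := by
    rw [Complex.norm_def, Complex.normSq_apply]
  have hpos : (0:ℝ) < ‖f x‖ := norm_pos_iff.mpr hx
  exact hsqrt.congr_deriv (by rw [habs]; field_simp; ring)

lemma cs_bound (a b : ℂ) : |a.re * b.re + a.im * b.im| ≤ ‖a‖ * ‖b‖ := by
  have h : a.re * b.re + a.im * b.im = ((starRingEnd ℂ) a * b).re := by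
    simp [Complex.mul_re]
  rw [h, ← Complex.norm_conj a, ← norm_mul]
  exact Complex.abs_re_le_norm _

lemma mul_exp_neg_anti {s t : ℝ} (hs : 1 ≤ s) (hst : s ≤ t) :
    t * Real.exp (-t) ≤ s * Real.exp (-s) := by
  have hs0 : 0 < s := by linarith
  have h2 : t - s + 1 ≤ Real.exp (t - s) := Real.add_one_le_exp _
  have h3 : t ≤ s * Real.exp (t - s) := by nlinarith
  have he : Real.exp (-t) * Real.exp (t - s) = Real.exp (-s) := by
    rw [← Real.exp_add]; ring_nf
  nlinarith [Real.exp_pos (-t), Real.exp_pos (t - s)]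

set_option maxHeartbeats 1000000

/-- C¹ curves in the punctured disk of radius 1/2 whose "hyperbolic-type"
length `∫ |γ'| / (|γ| |log |γ||)` is uniformly bounded and whose initial points tend to
the puncture have Euclidean lengths tending to `0`. -/
theorem stmt_4
    (M : ℝ) (hM : 0 < M)
    (γ γ' : ℕ → ℝ → ℂ)
    (hmem : ∀ n, ∀ u ∈ Set.Icc (0 : ℝ) 1, γ n u ≠ 0 ∧ ‖γ n u‖ ≤ 1 / 2)
    (hderiv : ∀ n, ∀ u ∈ Set.Icc (0 : ℝ) 1,
      HasDerivWithinAt (γ n) (γ' n u) (Set.Icc (0 : ℝ) 1) u)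
    (hcont : ∀ n, ContinuousOn (γ' n) (Set.Icc (0 : ℝ) 1))
    (hlen : ∀ n, (∫ u in (0 : ℝ)..1,
        ‖γ' n u‖ / (‖γ n u‖ * |Real.log (‖γ n u‖)|)) ≤ M)
    (h0 : Tendsto (fun n => γ n 0) atTop (nhds 0)) :
    Tendsto (fun n => ∫ u in (0 : ℝ)..1, ‖γ' n u‖) atTop (nhds 0) := by
  set c : ℝ := Real.exp (-M) with hc
  have hc0 : 0 < c := Real.exp_pos _
  set L : ℕ → ℝ := fun n => -Real.log (‖γ n 0‖) with hL
  -- key per-curve estimate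
  have key : ∀ n, 1 ≤ c * L n →
      (∫ u in (0 : ℝ)..1, ‖γ' n u‖) ≤ M * ((c * L n) * Real.exp (-(c * L n))) := by
    intro n hn
    set I := Set.Icc (0:ℝ) 1 with hI
    set r : ℝ → ℝ := fun u => ‖γ n u‖ with hr
    have hrpos : ∀ u ∈ I, 0 < r u := fun u hu => norm_pos_iff.mpr (hmem n u hu).1
    have hrhalf : ∀ u ∈ I, r u ≤ 1/2 := fun u hu => (hmem n u hu).2
    have hlogneg : ∀ u ∈ I, Real.log (r u) < 0 := fun u hu =>
      Real.log_neg (hrpos u hu) (lt_of_le_of_lt (hrhalf u hu) (by norm_num))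
    set R' : ℝ → ℝ := fun u => ((γ n u).re * (γ' n u).re + (γ n u).im * (γ' n u).im) / r u
      with hR'def
    have hR' : ∀ u ∈ I, HasDerivWithinAt r (R' u) I u := fun u hu =>
      hasDerivWithinAt_cabs (hderiv n u hu) (hmem n u hu).1
    have hR'le : ∀ u ∈ I, |R' u| ≤ ‖γ' n u‖ := by
      intro u hu
      rw [hR'def, abs_div, abs_of_pos (hrpos u hu), div_le_iff₀ (hrpos u hu)]
      calc |(γ n u).re * (γ' n u).re + (γ n u).im * (γ' n u).im|
          ≤ ‖γ n u‖ * ‖γ' n u‖ := cs_bound _ _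
        _ = ‖γ' n u‖ * r u := by rw [hr]; ring
    -- continuity facts
    have hγc : ContinuousOn (γ n) I := fun u hu => (hderiv n u hu).continuousWithinAt
    have hrc : ContinuousOn r I := continuous_norm.comp_continuousOn hγc
    have hR'c : ContinuousOn R' I := by
      apply ContinuousOn.div
      · exact ((Complex.continuous_re.comp_continuousOn hγc).mul
          (Complex.continuous_re.comp_continuousOn (hcont n))).add
          ((Complex.continuous_im.comp_continuousOn hγc).mul
          (Complex.continuous_im.comp_continuousOn (hcont n)))
      · exact hrc
      · exact fun u hu => (hrpos u hu).ne'
    have hlogc : ContinuousOn (fun u => Real.log (r u)) I :=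
      fun u hu => (Real.continuousAt_log (hrpos u hu).ne').continuousWithinAt.comp
        (hrc u hu) (Set.mapsTo_image _ _)
    set φ : ℝ → ℝ := fun u => ‖γ' n u‖ / (r u * |Real.log (r u)|) with hφdef
    have hφc : ContinuousOn φ I := by
      apply ContinuousOn.div
      · exact continuous_norm.comp_continuousOn (hcont n)
      · exact hrc.mul hlogc.abs
      · intro u hu
        exact mul_ne_zero (hrpos u hu).ne' (abs_ne_zero.2 (hlogneg u hu).ne)
    have hφ0 : ∀ u ∈ I, 0 ≤ φ u := by
      intro u hu
      apply div_nonneg (norm_nonneg _)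
      positivity
    set G : ℝ → ℝ := fun u => R' u / (r u * Real.log (r u)) with hGdef
    have hGc : ContinuousOn G I := by
      apply hR'c.div (hrc.mul hlogc)
      exact fun u hu => mul_ne_zero (hrpos u hu).ne' (hlogneg u hu).ne
    set g : ℝ → ℝ := fun u => Real.log (-Real.log (r u)) with hgdef
    have hG : ∀ u ∈ I, HasDerivWithinAt g (G u) I u := by
      intro u hu
      have h1 : HasDerivWithinAt (fun v => Real.log (r v)) (R' u / r u) I u :=
        (hR' u hu).log (hrpos u hu).ne'
      have h2 := (h1.neg).log (by simpa using (hlogneg u hu).ne)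
      convert h2 using 1
      · rfl
      rw [hGdef]
      field_simp
      simp [Pi.neg_apply, mul_neg, div_neg]
    have hgc : ContinuousOn g I := fun u hu => (hG u hu).continuousWithinAt
    -- FTC and the key pointwise log-log estimate
    have hGint : IntervalIntegrable G MeasureTheory.volume 0 1 := by
      apply ContinuousOn.intervalIntegrable
      rwa [Set.uIcc_of_le (by norm_num : (0:ℝ) ≤ 1)]
    have hφint : IntervalIntegrable φ MeasureTheory.volume 0 1 := by
      apply ContinuousOn.intervalIntegrable
      rwa [Set.uIcc_of_le (by norm_num : (0:ℝ) ≤ 1)]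
    have h0I : (0:ℝ) ∈ I := by constructor <;> norm_num
    have hbound : ∀ b ∈ I, c * L n ≤ -Real.log (r b) := by
      intro b hb
      have hftc : ∫ u in (0:ℝ)..b, G u = g b - g 0 := by
        apply intervalIntegral.integral_eq_sub_of_hasDeriv_right_of_le hb.1
        · exact hgc.mono (Set.Icc_subset_Icc le_rfl hb.2)
        · intro x hx
          have hxI : x ∈ I := ⟨le_of_lt hx.1, le_of_lt (lt_of_lt_of_le hx.2 hb.2)⟩
          have hxint : I ∈ nhds x := by
            rw [hI]
            exact Icc_mem_nhds hx.1 (lt_of_lt_of_le hx.2 hb.2)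
          exact ((hG x hxI).hasDerivAt hxint).hasDerivWithinAt
        · apply ContinuousOn.intervalIntegrable
          rw [Set.uIcc_of_le hb.1]
          exact hGc.mono (Set.Icc_subset_Icc le_rfl hb.2)
      have habsle : |g b - g 0| ≤ M := by
        rw [← hftc]
        calc |∫ u in (0:ℝ)..b, G u| ≤ ∫ u in (0:ℝ)..b, |G u| :=
              intervalIntegral.abs_integral_le_integral_abs hb.1
          _ ≤ ∫ u in (0:ℝ)..b, φ u := by
              apply intervalIntegral.integral_mono_on hb.1
              · apply IntervalIntegrable.abs
                apply ContinuousOn.intervalIntegrable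
                rw [Set.uIcc_of_le hb.1]
                exact hGc.mono (Set.Icc_subset_Icc le_rfl hb.2)
              · apply ContinuousOn.intervalIntegrable
                rw [Set.uIcc_of_le hb.1]
                exact hφc.mono (Set.Icc_subset_Icc le_rfl hb.2)
              · intro u hu
                have huI : u ∈ I := ⟨hu.1, le_trans hu.2 hb.2⟩
                have hdpos : 0 < r u * |Real.log (r u)| :=
                  mul_pos (hrpos u huI) (abs_pos.2 (hlogneg u huI).ne)
                have : |G u| = |R' u| / (r u * |Real.log (r u)|) := by
                  rw [hGdef, abs_div, abs_mul, abs_of_pos (hrpos u huI)]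
                have hφu : φ u = ‖γ' n u‖ / (r u * |Real.log (r u)|) := by
                  simp only [hφdef]
                rw [this, hφu]
                gcongr
                exact hR'le u huI
          _ ≤ ∫ u in (0:ℝ)..1, φ u := by
              apply intervalIntegral.integral_mono_interval le_rfl hb.1 hb.2
              · filter_upwards [MeasureTheory.ae_restrict_mem measurableSet_Ioc] with u hu
                exact hφ0 u ⟨le_of_lt hu.1, hu.2⟩
              · exact hφint
          _ ≤ M := by
              have h := hlen n
              calc (∫ u in (0:ℝ)..1, φ u)
                  = ∫ u in (0:ℝ)..1, ‖γ' n u‖ /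
                      (‖γ n u‖ * |Real.log (‖γ n u‖)|) := by
                    simp only [hφdef, hr]
                _ ≤ M := h
      have hgb : g 0 - M ≤ g b := by
        have := abs_le.1 habsle
        linarith [this.1]
      have hexp : Real.exp (g 0 - M) ≤ Real.exp (g b) := Real.exp_le_exp.2 hgb
      have he0 : Real.exp (g 0) = -Real.log (r 0) := Real.exp_log (by linarith [hlogneg 0 h0I])
      have heb : Real.exp (g b) = -Real.log (r b) := Real.exp_log (by linarith [hlogneg b hb])
      rw [Real.exp_sub, he0, heb] at hexp
      have hLr : L n = -Real.log (r 0) := by simp only [hL, hr]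
      calc c * L n = -Real.log (r 0) / Real.exp M := by
            rw [hLr, hc, Real.exp_neg]; ring
        _ ≤ -Real.log (r b) := hexp
    -- now the Euclidean length estimate
    have hK0 : 0 ≤ (c * L n) * Real.exp (-(c * L n)) := by positivity
    have hφM : (∫ u in (0:ℝ)..1, φ u) ≤ M := by
      calc (∫ u in (0:ℝ)..1, φ u)
          = ∫ u in (0:ℝ)..1, ‖γ' n u‖ /
              (‖γ n u‖ * |Real.log (‖γ n u‖)|) := by
            simp only [hφdef, hr]
        _ ≤ M := hlen n
    have hpt : ∀ u ∈ I, ‖γ' n u‖ ≤ φ u * ((c * L n) * Real.exp (-(c * L n))) := by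
      intro u hu
      have ht : c * L n ≤ -Real.log (r u) := hbound u hu
      have hrexp : r u = Real.exp (-(-Real.log (r u))) := by
        rw [neg_neg, Real.exp_log (hrpos u hu)]
      have h1 : r u * (-Real.log (r u)) ≤ (c * L n) * Real.exp (-(c * L n)) := by
        calc r u * (-Real.log (r u))
            = (-Real.log (r u)) * Real.exp (-(-Real.log (r u))) := by rw [← hrexp]; ring
          _ ≤ (c * L n) * Real.exp (-(c * L n)) := mul_exp_neg_anti hn ht
      have hdne : r u * |Real.log (r u)| ≠ 0 :=
        (mul_pos (hrpos u hu) (abs_pos.2 (hlogneg u hu).ne)).ne'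
      have heq : ‖γ' n u‖ = φ u * (r u * |Real.log (r u)|) := by
        rw [hφdef]
        field_simp
        rw [mul_assoc, mul_div_cancel_right₀ _ hdne]
      rw [heq, abs_of_neg (hlogneg u hu)]
      exact mul_le_mul_of_nonneg_left (by simpa using h1) (hφ0 u hu)
    calc (∫ u in (0:ℝ)..1, ‖γ' n u‖)
        ≤ ∫ u in (0:ℝ)..1, φ u * ((c * L n) * Real.exp (-(c * L n))) := by
          apply intervalIntegral.integral_mono_on (by norm_num)
          · apply ContinuousOn.intervalIntegrable
            rw [Set.uIcc_of_le (by norm_num : (0:ℝ) ≤ 1)]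
            exact continuous_norm.comp_continuousOn (hcont n)
          · apply ContinuousOn.intervalIntegrable
            rw [Set.uIcc_of_le (by norm_num : (0:ℝ) ≤ 1)]
            exact hφc.mul continuousOn_const
          · exact hpt
      _ = (∫ u in (0:ℝ)..1, φ u) * ((c * L n) * Real.exp (-(c * L n))) :=
          intervalIntegral.integral_mul_const _ _
      _ ≤ M * ((c * L n) * Real.exp (-(c * L n))) :=
          mul_le_mul_of_nonneg_right hφM hK0
  -- pass to the limit
  have hL0pos : ∀ n, 0 < ‖γ n 0‖ :=
    fun n => norm_pos_iff.mpr (hmem n 0 ⟨le_refl 0, by norm_num⟩).1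
  have habs0 : Tendsto (fun n => ‖γ n 0‖) atTop (nhds 0) := by
    have := (continuous_norm.tendsto 0).comp h0
    simpa [Function.comp_def] using this
  have hmem0 : Tendsto (fun n => ‖γ n 0‖) atTop (𝓝[>] 0) :=
    tendsto_nhdsWithin_of_tendsto_nhds_of_eventually_within _ habs0
      (Eventually.of_forall fun n => hL0pos n)
  have hLtop : Tendsto L atTop atTop := by
    rw [hL]
    have hlog : Tendsto (fun n => Real.log (‖γ n 0‖)) atTop atBot :=
      Real.tendsto_log_nhdsGT_zero.comp hmem0
    exact tendsto_neg_atBot_atTop.comp hlog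
  have hcL : Tendsto (fun n => c * L n) atTop atTop := hLtop.const_mul_atTop hc0
  have hbnd : Tendsto (fun n => M * ((c * L n) * Real.exp (-(c * L n)))) atTop (nhds 0) := by
    have hx : Tendsto (fun x : ℝ => x * Real.exp (-x)) atTop (nhds 0) := by
      simpa using Real.tendsto_pow_mul_exp_neg_atTop_nhds_zero 1
    have := (hx.comp hcL).const_mul M
    simpa [Function.comp] using this
  apply tendsto_of_tendsto_of_tendsto_of_le_of_le' tendsto_const_nhds hbnd
  · exact Eventually.of_forall fun n =>
      intervalIntegral.integral_nonneg (by norm_num) (fun u _ => norm_nonneg _)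
  · exact (hcL.eventually_ge_atTop 1).mono fun n hn => key n hn
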